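/- Every order unit space $(V,C,u)$ over an ordered subfield $\mathbb{F}$ of $\mathbb{R}$ admits a probability measure, i.e., there exists a linear functional $\rho : V \to \mathbb{R}$ with $\rho(a) \geq 0$ for all $a \in C$ and $\rho(u) = 1$. -/

import Mathlib

set_option synthInstance.maxHeartbeats 1000000
set_option maxHeartbeats 1000000


/-- An order unit space `(V, C, u)` over an ordered field `𝔽`. -/
structure OUS (𝔽 V : Type*) [Field 𝔽] [LinearOrder 𝔽] [IsStrictOrderedRing 𝔽] [AddCommGroup V] [Module 𝔽 V] where
  C : Set V
  u : V
  add_mem : ∀ ⦃a⦄, a ∈ C → ∀ ⦃b⦄, b ∈ C → a + b ∈ C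
  smul_mem : ∀ l : 𝔽, 0 ≤ l → ∀ ⦃a⦄, a ∈ C → l • a ∈ C
  u_mem : u ∈ C
  neg_u_not_mem : -u ∉ C
  order_unit : ∀ a : V, ∃ l : 𝔽, l • u + a ∈ C

section Aux

open Set Submodule

variable {F : Subfield ℝ} {V : Type*} [AddCommGroup V] [Module F V] (O : OUS F V)

theorem OUS.smul_mem_of_pos {r : F} (hr : 0 < r) {a : V} (ha : a ∈ O.C) : r • a ∈ O.C :=
  O.smul_mem r hr.le ha

theorem OUS.mem_of_smul_mem {r : F} (hr : 0 < r) {a : V} (ha : r • a ∈ O.C) : a ∈ O.C := by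
  have := O.smul_mem r⁻¹ (by positivity) ha
  rwa [smul_smul, inv_mul_cancel₀ hr.ne', one_smul] at this

/-- Key positivity: if `l • u ∈ C` then `0 ≤ l`. -/
theorem OUS.nonneg_of_smul_u_mem {l : F} (hl : l • O.u ∈ O.C) : 0 ≤ l := by
  by_contra h
  push_neg at h
  have : (-l⁻¹) • (l • O.u) ∈ O.C :=
    O.smul_mem _ (neg_nonneg.2 (inv_nonpos.2 h.le)) hl
  rw [smul_smul, neg_mul, inv_mul_cancel₀ h.ne, neg_smul, one_smul] at this
  exact O.neg_u_not_mem this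

/-- Induction step in M. Riesz extension theorem, adapted to a subfield `F ⊆ ℝ`. -/
theorem OUS.step (f : V →ₗ.[F] ℝ) (nonneg : ∀ x : f.domain, (x : V) ∈ O.C → 0 ≤ f x)
    (dense : ∀ y, ∃ x : f.domain, (x : V) + y ∈ O.C) (hdom : f.domain ≠ ⊤) :
    ∃ g, f < g ∧ ∀ x : g.domain, (x : V) ∈ O.C → 0 ≤ g x := by
  obtain ⟨y, -, hy⟩ : ∃ y ∈ (⊤ : Submodule F V), y ∉ f.domain :=
    SetLike.exists_of_lt (lt_top_iff_ne_top.2 hdom)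
  obtain ⟨c, le_c, c_le⟩ :
      ∃ c : ℝ, (∀ x : f.domain, -(x : V) - y ∈ O.C → f x ≤ c) ∧
        ∀ x : f.domain, (x : V) + y ∈ O.C → c ≤ f x := by
    set Sp := f '' { x : f.domain | (x : V) + y ∈ O.C }
    set Sn := f '' { x : f.domain | -(x : V) - y ∈ O.C }
    suffices (upperBounds Sn ∩ lowerBounds Sp).Nonempty by
      simpa only [Set.Nonempty, upperBounds, lowerBounds, mem_inter_iff, mem_setOf_eq, Sn, Sp, forall_mem_image] using this
    refine exists_between_of_forall_le (Nonempty.image f ?_) (Nonempty.image f (dense y)) ?_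
    · rcases dense (-y) with ⟨x, hx⟩
      rw [← neg_neg x, NegMemClass.coe_neg, ← sub_eq_add_neg] at hx
      exact ⟨_, hx⟩
    rintro a ⟨xn, hxn, rfl⟩ b ⟨xp, hxp, rfl⟩
    have := O.add_mem hxp hxn
    rw [add_assoc, add_sub_cancel, ← sub_eq_add_neg, ← AddSubgroupClass.coe_sub] at this
    replace := nonneg _ this
    rwa [f.map_sub, sub_nonneg] at this
  refine ⟨f.supSpanSingleton y (-c) hy, ?_, ?_⟩
  · refine lt_iff_le_not_ge.2 ⟨f.left_le_sup _ _, fun H => ?_⟩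
    replace H := LinearPMap.domain_mono.monotone H
    rw [LinearPMap.domain_supSpanSingleton, sup_le_iff, span_le, singleton_subset_iff] at H
    exact hy H.2
  · rintro ⟨z, hz⟩ hzs
    rcases mem_sup.1 hz with ⟨x, hx, y', hy', rfl⟩
    rcases mem_span_singleton.1 hy' with ⟨r, rfl⟩
    simp only [Subtype.coe_mk] at hzs
    rw [LinearPMap.supSpanSingleton_apply_mk _ _ _ _ _ hx, smul_neg, ← sub_eq_add_neg, sub_nonneg]
    have hrc : r • c = (r : ℝ) * c := rfl
    rcases lt_trichotomy r 0 with (hr | hr | hr)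
    · have hrne : r ≠ 0 := hr.ne
      have hxs : -(r⁻¹ • x) - y ∈ O.C := by
        have key : ((-r⁻¹ : F)) • (x + r • y) = -(r⁻¹ • x) - y := by
          have h1 : (-r⁻¹ * r : F) = -1 := by field_simp
          rw [smul_add, smul_smul, h1, neg_one_smul, neg_smul, ← sub_eq_add_neg]
        have := O.smul_mem_of_pos (r := -r⁻¹)
          (by exact neg_pos.2 (inv_lt_zero.2 hr)) hzs
        rwa [key] at this
      have hmem : r⁻¹ • x ∈ f.domain := f.domain.smul_mem _ hx
      have hle : f ⟨r⁻¹ • x, hmem⟩ ≤ c := le_c ⟨r⁻¹ • x, hmem⟩ hxs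
      have heq : f ⟨r⁻¹ • x, hmem⟩ = ((r⁻¹ : F) : ℝ) * f ⟨x, hx⟩ := by
        have : (⟨r⁻¹ • x, hmem⟩ : f.domain) = r⁻¹ • (⟨x, hx⟩ : f.domain) := rfl
        rw [this, f.map_smul]
        rfl
      rw [heq] at hle
      have hrR : (r : ℝ) < 0 := hr
      have hinv : ((r⁻¹ : F) : ℝ) = (r : ℝ)⁻¹ := by push_cast; ring
      rw [hinv] at hle
      rw [RingHom.id_apply, hrc]
      calc (r : ℝ) * c ≤ (r : ℝ) * ((r : ℝ)⁻¹ * f ⟨x, hx⟩) :=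
            mul_le_mul_of_nonpos_left hle hrR.le
        _ = f ⟨x, hx⟩ := by rw [← mul_assoc, mul_inv_cancel₀ hrR.ne, one_mul]
    · subst r
      simp only [RingHom.id_apply, zero_smul, add_zero] at hzs ⊢
      exact nonneg ⟨x, hx⟩ hzs
    · have hrne : r ≠ 0 := hr.ne'
      have hxs : r⁻¹ • x + y ∈ O.C := by
        have key : ((r⁻¹ : F)) • (x + r • y) = r⁻¹ • x + y := by
          rw [smul_add, smul_smul, inv_mul_cancel₀ hrne, one_smul]
        have := O.smul_mem_of_pos (r := r⁻¹) (by exact inv_pos.2 hr) hzs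
        rwa [key] at this
      have hmem : r⁻¹ • x ∈ f.domain := f.domain.smul_mem _ hx
      have hle : c ≤ f ⟨r⁻¹ • x, hmem⟩ := c_le ⟨r⁻¹ • x, hmem⟩ hxs
      have heq : f ⟨r⁻¹ • x, hmem⟩ = ((r⁻¹ : F) : ℝ) * f ⟨x, hx⟩ := by
        have : (⟨r⁻¹ • x, hmem⟩ : f.domain) = r⁻¹ • (⟨x, hx⟩ : f.domain) := rfl
        rw [this, f.map_smul]
        rfl
      rw [heq] at hle
      have hrR : (0 : ℝ) < (r : ℝ) := hr
      have hinv : ((r⁻¹ : F) : ℝ) = (r : ℝ)⁻¹ := by push_cast; ring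
      rw [hinv] at hle
      rw [RingHom.id_apply, hrc]
      calc (r : ℝ) * c ≤ (r : ℝ) * ((r : ℝ)⁻¹ * f ⟨x, hx⟩) :=
            mul_le_mul_of_nonneg_left hle hrR.le
        _ = f ⟨x, hx⟩ := by rw [← mul_assoc, mul_inv_cancel₀ hrR.ne', one_mul]

theorem OUS.exists_top (p : V →ₗ.[F] ℝ) (hp_nonneg : ∀ x : p.domain, (x : V) ∈ O.C → 0 ≤ p x)
    (hp_dense : ∀ y, ∃ x : p.domain, (x : V) + y ∈ O.C) :
    ∃ q ≥ p, q.domain = ⊤ ∧ ∀ x : q.domain, (x : V) ∈ O.C → 0 ≤ q x := by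
  set S := { p : V →ₗ.[F] ℝ | ∀ x : p.domain, (x : V) ∈ O.C → 0 ≤ p x }
  have hSc : ∀ c, c ⊆ S → IsChain (· ≤ ·) c → ∀ y ∈ c, ∃ ub ∈ S, ∀ z ∈ c, z ≤ ub := by
    intro c hcs c_chain y hy
    clear hp_nonneg hp_dense p
    have cne : c.Nonempty := ⟨y, hy⟩
    have hcd : DirectedOn (· ≤ ·) c := c_chain.directedOn
    refine ⟨LinearPMap.sSup c hcd, ?_, fun _ ↦ LinearPMap.le_sSup hcd⟩
    rintro ⟨x, hx⟩ hxs
    have hdir : DirectedOn (· ≤ ·) (LinearPMap.domain '' c) :=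
      directedOn_image.2 (hcd.mono LinearPMap.domain_mono.monotone)
    rcases (mem_sSup_of_directed (cne.image _) hdir).1 hx with ⟨_, ⟨f, hfc, rfl⟩, hfx⟩
    have : f ≤ LinearPMap.sSup c hcd := LinearPMap.le_sSup _ hfc
    convert ← hcs hfc ⟨x, hfx⟩ hxs using 1
    exact this.2 rfl
  obtain ⟨q, hpq, hqs, hq⟩ := zorn_le_nonempty₀ S hSc p hp_nonneg
  refine ⟨q, hpq, ?_, hqs⟩
  contrapose! hq
  have hqd : ∀ y, ∃ x : q.domain, (x : V) + y ∈ O.C := fun y ↦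
    let ⟨x, hx⟩ := hp_dense y
    ⟨Submodule.inclusion hpq.left x, hx⟩
  rcases O.step q hqs hqd hq with ⟨r, hqr, hr⟩
  exact ⟨r, hr, hqr.le, fun hrq ↦ hqr.ne' <| hrq.antisymm hqr.le⟩

theorem OUS.riesz_extension (f : V →ₗ.[F] ℝ)
    (nonneg : ∀ x : f.domain, (x : V) ∈ O.C → 0 ≤ f x)
    (dense : ∀ y, ∃ x : f.domain, (x : V) + y ∈ O.C) :
    ∃ g : V →ₗ[F] ℝ, (∀ x : f.domain, g x = f x) ∧ ∀ x ∈ O.C, 0 ≤ g x := by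
  rcases O.exists_top f nonneg dense
    with ⟨⟨g_dom, g⟩, ⟨-, hfg⟩, rfl : g_dom = ⊤, hgs⟩
  refine ⟨g.comp (LinearMap.id.codRestrict ⊤ fun _ ↦ trivial), ?_, ?_⟩
  · exact fun x => (hfg rfl).symm
  · exact fun x hx => hgs ⟨x, _⟩ hx

end Aux

/-- Every order unit space over an ordered subfield of `ℝ` admits a probability measure. -/
theorem stmt2 (F : Subfield ℝ) {V : Type*} [AddCommGroup V] [Module F V] (O : OUS F V) :
    ∃ ρ : V →ₗ[F] ℝ, (∀ a ∈ O.C, 0 ≤ ρ a) ∧ ρ O.u = 1 := by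
  classical
  -- the partial functional on span {u} sending u to 1
  have hu0 : O.u ≠ 0 := by
    intro h
    apply O.neg_u_not_mem
    rw [h, neg_zero]
    simpa using O.smul_mem 0 le_rfl O.u_mem
  let f : V →ₗ.[F] ℝ := LinearPMap.mkSpanSingleton O.u 1 hu0
  have hdom : f.domain = Submodule.span F {O.u} := rfl
  have hval : ∀ (l : F) (h : l • O.u ∈ f.domain), f ⟨l • O.u, h⟩ = (l : ℝ) := by
    intro l h
    have := LinearPMap.mkSpanSingleton'_apply O.u (1 : ℝ) _ l h
    have h2 : l • (1 : ℝ) = (l : ℝ) := by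
      rw [show l • (1 : ℝ) = (l : ℝ) * 1 from rfl, mul_one]
    rw [RingHom.id_apply, h2] at this; simpa [f] using this
  have nonneg : ∀ x : f.domain, (x : V) ∈ O.C → 0 ≤ f x := by
    rintro ⟨x, hx⟩ hxs
    rcases Submodule.mem_span_singleton.1 hx with ⟨l, rfl⟩
    rw [hval l hx]
    exact_mod_cast O.nonneg_of_smul_u_mem hxs
  have dense : ∀ y, ∃ x : f.domain, (x : V) + y ∈ O.C := by
    intro y
    rcases O.order_unit y with ⟨l, hl⟩
    exact ⟨⟨l • O.u, Submodule.mem_span_singleton.2 ⟨l, rfl⟩⟩, hl⟩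
  rcases O.riesz_extension f nonneg dense with ⟨g, hg, hgs⟩
  refine ⟨g, hgs, ?_⟩
  have hu : O.u ∈ f.domain := Submodule.mem_span_singleton.2 ⟨1, by simp⟩
  have := hg ⟨O.u, hu⟩
  have h1 : f ⟨O.u, hu⟩ = (1 : ℝ) := by
    have := hval 1 (by simpa using hu)
    simpa using this
  simp only [h1] at this
  simpa using this
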